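/- arXiv:2305.04020 — 2 statements merged into one kernel-verified Lean document; each statement's English description precedes it below -/
import Mathlib

section
/- Let q₁, q₂, q₃, q₄ be positive integers with (q₁q₂, q₃q₄) = (q₁, q₂) = (q₃, q₄) = 1, and define λ*(a, b, l, m, n) = ∑_{1 ≤ x,y,z ≤ ab, x²+y²+z+1 ≡ 0 (mod a), x²+y²+z+2 ≡ 0 (mod b)} e((lx+my+nz)/(ab)). Then λ*(q₁q₂, q₃q₄, l, m, n) = λ*(q₁, q₃, l·u, m·u, n·u) · λ*(q₂, q₄, l·v, m·v, n·v), where u is the inverse of q₂q₄ modulo q₁q₃ and v is the inverse of q₁q₃ modulo q₂q₄. -/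
open Finset

noncomputable def e (t : ℝ) : ℂ := Complex.exp (2 * Real.pi * Complex.I * t)

/-- λ*(a, b, l, m, n): exponential sum over triples (x,y,z) mod ab with
x²+y²+z+1 ≡ 0 (mod a) and x²+y²+z+2 ≡ 0 (mod b). -/
noncomputable def lamStar (a b : ℕ) (l m n : ℤ) : ℂ :=
  ∑ x ∈ Finset.Icc 1 (a * b), ∑ y ∈ Finset.Icc 1 (a * b), ∑ z ∈ Finset.Icc 1 (a * b),
    if a ∣ (x ^ 2 + y ^ 2 + z + 1) ∧ b ∣ (x ^ 2 + y ^ 2 + z + 2) then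
      e (((l * (x : ℤ) + m * (y : ℤ) + n * (z : ℤ) : ℤ) : ℝ) / ((a * b : ℕ) : ℝ))
    else 0

lemma e_add (s t : ℝ) : e (s + t) = e s * e t := by
  unfold e
  rw [← Complex.exp_add]
  push_cast
  ring_nf

lemma e_int (k : ℤ) : e (k : ℝ) = 1 := by
  unfold e
  rw [show (2 * (Real.pi : ℂ) * Complex.I * ((k : ℝ) : ℂ)) = (k : ℂ) * (2 * Real.pi * Complex.I)
    by push_cast; ring]
  exact Complex.exp_int_mul_two_pi_mul_I k

lemma e_add_int (t : ℝ) (k : ℤ) : e (t + (k : ℝ)) = e t := by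
  rw [e_add, e_int, mul_one]

/-- The standard additive character on `ZMod N`. -/
noncomputable def chiN (N : ℕ) (a : ZMod N) : ℂ := e ((a.val : ℝ) / (N : ℝ))

lemma chiN_intCast (N : ℕ) [NeZero N] (k : ℤ) :
    chiN N ((k : ℤ) : ZMod N) = e ((k : ℝ) / (N : ℝ)) := by
  have hN : (N : ℝ) ≠ 0 := Nat.cast_ne_zero.mpr (NeZero.ne N)
  have hk : (((k : ZMod N).val : ℤ) + (N : ℤ) * (k / N)) = k := by
    rw [ZMod.val_intCast]
    exact Int.emod_add_mul_ediv k N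
  have hreal : (k : ℝ) = ((k : ZMod N).val : ℝ) + (N : ℝ) * ((k / N : ℤ) : ℝ) := by
    exact_mod_cast (congrArg (Int.cast : ℤ → ℝ) hk).symm
  unfold chiN
  rw [hreal, add_div, mul_div_cancel_left₀ _ hN, e_add_int]

lemma sum_Icc_zmod {N : ℕ} [NeZero N] (hN : 0 < N) (f : ZMod N → ℂ) :
    ∑ x ∈ Icc 1 N, f (x : ZMod N) = ∑ x : ZMod N, f x := by
  refine Finset.sum_nbij' (fun x : ℕ => (x : ZMod N))
    (fun a : ZMod N => if a = 0 then N else a.val) ?_ ?_ ?_ ?_ ?_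
  · intro a _; exact mem_univ _
  · intro a _
    by_cases h : a = 0
    · rw [if_pos h]; exact mem_Icc.mpr ⟨hN, le_refl N⟩
    · rw [if_neg h]
      refine mem_Icc.mpr ⟨?_, (ZMod.val_lt a).le⟩
      have : a.val ≠ 0 := fun hval => h ((ZMod.val_eq_zero a).mp hval)
      omega
  · intro x hx
    rw [mem_Icc] at hx
    by_cases h : (x : ZMod N) = 0
    · rw [if_pos h]
      have hdvd : N ∣ x := (ZMod.natCast_eq_zero_iff x N).mp h
      have := Nat.le_of_dvd (by omega) hdvd
      omega
    · have hxN : x ≠ N := by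
        intro hEq
        apply h
        rw [hEq]
        exact ZMod.natCast_self N
      rw [if_neg h, ZMod.val_natCast, Nat.mod_eq_of_lt (by omega)]
  · intro a _
    by_cases h : a = 0
    · rw [if_pos h, h, ZMod.natCast_self]
    · rw [if_neg h, ZMod.natCast_zmod_val]
  · intro x _; rfl

lemma sum3_Icc_zmod {N : ℕ} [NeZero N] (hN : 0 < N) (f : ZMod N → ZMod N → ZMod N → ℂ) :
    ∑ x ∈ Icc 1 N, ∑ y ∈ Icc 1 N, ∑ z ∈ Icc 1 N, f (x : ZMod N) (y : ZMod N) (z : ZMod N)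
      = ∑ x : ZMod N, ∑ y : ZMod N, ∑ z : ZMod N, f x y z := by
  rw [sum_Icc_zmod hN (fun X : ZMod N => ∑ y ∈ Icc 1 N, ∑ z ∈ Icc 1 N, f X (y : ZMod N) (z : ZMod N))]
  refine Fintype.sum_congr _ _ fun X => ?_
  rw [sum_Icc_zmod hN (fun Y : ZMod N => ∑ z ∈ Icc 1 N, f X Y (z : ZMod N))]
  exact Fintype.sum_congr _ _ fun Y => sum_Icc_zmod hN (f X Y)

lemma F_natCast (a b N : ℕ) [NeZero N] (haN : a ∣ N) (hbN : b ∣ N) (l m n : ℤ) (x y z : ℕ) :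
    (if (ZMod.castHom haN (ZMod a)) ((x : ZMod N) ^ 2 + (y : ZMod N) ^ 2 + (z : ZMod N) + 1) = 0 ∧
        (ZMod.castHom hbN (ZMod b)) ((x : ZMod N) ^ 2 + (y : ZMod N) ^ 2 + (z : ZMod N) + 2) = 0 then
      chiN N ((l : ZMod N) * (x : ZMod N) + (m : ZMod N) * (y : ZMod N) + (n : ZMod N) * (z : ZMod N))
    else 0)
    = if a ∣ (x ^ 2 + y ^ 2 + z + 1) ∧ b ∣ (x ^ 2 + y ^ 2 + z + 2) then
        e (((l * (x : ℤ) + m * (y : ℤ) + n * (z : ℤ) : ℤ) : ℝ) / (N : ℝ))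
      else 0 := by
  have h1 : ((x : ZMod N) ^ 2 + (y : ZMod N) ^ 2 + (z : ZMod N) + 1)
      = ((x ^ 2 + y ^ 2 + z + 1 : ℕ) : ZMod N) := by push_cast; ring
  have h2 : ((x : ZMod N) ^ 2 + (y : ZMod N) ^ 2 + (z : ZMod N) + 2)
      = ((x ^ 2 + y ^ 2 + z + 2 : ℕ) : ZMod N) := by push_cast; ring
  have harg : (l : ZMod N) * (x : ZMod N) + (m : ZMod N) * (y : ZMod N) + (n : ZMod N) * (z : ZMod N)
      = ((l * (x : ℤ) + m * (y : ℤ) + n * (z : ℤ) : ℤ) : ZMod N) := by push_cast; ring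
  rw [h1, h2, harg, chiN_intCast]
  refine if_congr ?_ rfl rfl
  rw [map_natCast, map_natCast, ZMod.natCast_eq_zero_iff,
    ZMod.natCast_eq_zero_iff]

lemma lamStar_eq_zmod (a b N : ℕ) [NeZero N] (ha : 0 < a) (hb : 0 < b) (hN : N = a * b)
    (haN : a ∣ N) (hbN : b ∣ N) (l m n : ℤ) :
    lamStar a b l m n =
      ∑ x : ZMod N, ∑ y : ZMod N, ∑ z : ZMod N,
        if (ZMod.castHom haN (ZMod a)) (x ^ 2 + y ^ 2 + z + 1) = 0 ∧
           (ZMod.castHom hbN (ZMod b)) (x ^ 2 + y ^ 2 + z + 2) = 0 then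
          chiN N ((l : ZMod N) * x + (m : ZMod N) * y + (n : ZMod N) * z)
        else 0 := by
  subst hN
  rw [← sum3_Icc_zmod (Nat.mul_pos ha hb)]
  unfold lamStar
  refine Finset.sum_congr rfl fun x _ => Finset.sum_congr rfl fun y _ =>
    Finset.sum_congr rfl fun z _ => ?_
  exact (F_natCast a b (a * b) haN hbN l m n x y z).symm

lemma e_split {A B : ℕ} (hA : 0 < A) (hB : 0 < B) (hAB : Nat.Coprime A B) {u v : ℤ}
    (hu : (B : ℤ) * u ≡ 1 [ZMOD (A : ℤ)]) (hv : (A : ℤ) * v ≡ 1 [ZMOD (B : ℤ)]) (k : ℤ) :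
    e ((k : ℝ) / ((A * B : ℕ) : ℝ)) =
      e (((u * k : ℤ) : ℝ) / ((A : ℕ) : ℝ)) * e (((v * k : ℤ) : ℝ) / ((B : ℕ) : ℝ)) := by
  have hA0 : ((A : ℕ) : ℝ) ≠ 0 := Nat.cast_ne_zero.mpr hA.ne'
  have hB0 : ((B : ℕ) : ℝ) ≠ 0 := Nat.cast_ne_zero.mpr hB.ne'
  have h1 : (A : ℤ) ∣ (1 - (B : ℤ) * u) := Int.ModEq.dvd hu
  have h2 : (B : ℤ) ∣ (1 - (A : ℤ) * v) := Int.ModEq.dvd hv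
  have hdvdA : (A : ℤ) ∣ (u * k * B + v * k * A - k) := by
    have heq : u * k * (B : ℤ) + v * k * A - k = -(k * (1 - (B : ℤ) * u)) + (v * k) * A := by ring
    rw [heq]
    exact dvd_add (dvd_neg.mpr (Dvd.dvd.mul_left h1 k)) (dvd_mul_left _ _)
  have hdvdB : (B : ℤ) ∣ (u * k * B + v * k * A - k) := by
    have heq : u * k * (B : ℤ) + v * k * A - k = -(k * (1 - (A : ℤ) * v)) + (u * k) * B := by ring
    rw [heq]
    exact dvd_add (dvd_neg.mpr (Dvd.dvd.mul_left h2 k)) (dvd_mul_left _ _)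
  have hcop : IsCoprime (A : ℤ) (B : ℤ) := Nat.isCoprime_iff_coprime.mpr hAB
  obtain ⟨j, hj⟩ := hcop.mul_dvd hdvdA hdvdB
  rw [← e_add]
  have hj' : (u : ℝ) * k * B + v * k * A - k = A * B * j := by
    exact_mod_cast congrArg (Int.cast : ℤ → ℝ) hj
  have key : ((u * k : ℤ) : ℝ) / ((A : ℕ) : ℝ) + ((v * k : ℤ) : ℝ) / ((B : ℕ) : ℝ)
      = (k : ℝ) / ((A * B : ℕ) : ℝ) + (j : ℝ) := by
    push_cast
    field_simp
    ring_nf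
    ring_nf at hj'
    linarith [hj']
  rw [key, e_add_int]

lemma crt_fst (A B : ℕ) [NeZero A] [NeZero B] (h : Nat.Coprime A B) (w : ZMod (A * B)) :
    (ZMod.chineseRemainder h w).1 = ZMod.castHom (dvd_mul_right A B) (ZMod A) w := by
  haveI : NeZero (A * B) := ⟨mul_ne_zero (NeZero.ne A) (NeZero.ne B)⟩
  obtain ⟨k, rfl⟩ := ZMod.natCast_zmod_surjective w
  simp [map_natCast]

lemma crt_snd (A B : ℕ) [NeZero A] [NeZero B] (h : Nat.Coprime A B) (w : ZMod (A * B)) :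
    (ZMod.chineseRemainder h w).2 = ZMod.castHom (dvd_mul_left B A) (ZMod B) w := by
  haveI : NeZero (A * B) := ⟨mul_ne_zero (NeZero.ne A) (NeZero.ne B)⟩
  obtain ⟨k, rfl⟩ := ZMod.natCast_zmod_surjective w
  simp [map_natCast]

lemma sum3_equiv {α β : Type*} [Fintype α] [Fintype β] (ψ : α ≃ β) (f : α → α → α → ℂ) :
    (∑ x, ∑ y, ∑ z, f x y z) = ∑ p, ∑ q, ∑ r, f (ψ.symm p) (ψ.symm q) (ψ.symm r) := by
  refine Fintype.sum_equiv ψ _ _ fun x => ?_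
  refine Fintype.sum_equiv ψ _ _ fun y => ?_
  refine Fintype.sum_equiv ψ _ _ fun z => ?_
  simp

lemma sum6 {α β : Type*} [Fintype α] [Fintype β] (f : α → α → α → ℂ) (g : β → β → β → ℂ) :
    (∑ x, ∑ y, ∑ z, f x y z) * (∑ x, ∑ y, ∑ z, g x y z)
      = ∑ p : α × β, ∑ q : α × β, ∑ r : α × β, f p.1 q.1 r.1 * g p.2 q.2 r.2 := by
  have : (∑ x, ∑ y, ∑ z, f x y z) * (∑ x, ∑ y, ∑ z, g x y z)
      = ∑ x₁, ∑ x₂, ∑ y₁, ∑ y₂, ∑ z₁, ∑ z₂, f x₁ y₁ z₁ * g x₂ y₂ z₂ := by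
    rw [Fintype.sum_mul_sum]
    refine Fintype.sum_congr _ _ fun x₁ => Fintype.sum_congr _ _ fun x₂ => ?_
    rw [Fintype.sum_mul_sum]
    refine Fintype.sum_congr _ _ fun y₁ => Fintype.sum_congr _ _ fun y₂ => ?_
    rw [Fintype.sum_mul_sum]
  rw [this]
  simp [Fintype.sum_prod_type]

theorem lamStar_multiplicative (q₁ q₂ q₃ q₄ : ℕ) (h₁ : 0 < q₁) (h₂ : 0 < q₂) (h₃ : 0 < q₃)
    (h₄ : 0 < q₄) (hco₁ : Nat.Coprime (q₁ * q₂) (q₃ * q₄)) (hco₂ : Nat.Coprime q₁ q₂)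
    (hco₃ : Nat.Coprime q₃ q₄) (l m n : ℤ) (u v : ℤ)
    (hu : ((q₂ * q₄ : ℕ) : ℤ) * u ≡ 1 [ZMOD ((q₁ * q₃ : ℕ) : ℤ)])
    (hv : ((q₁ * q₃ : ℕ) : ℤ) * v ≡ 1 [ZMOD ((q₂ * q₄ : ℕ) : ℤ)]) :
    lamStar (q₁ * q₂) (q₃ * q₄) l m n =
      lamStar q₁ q₃ (l * u) (m * u) (n * u) * lamStar q₂ q₄ (l * v) (m * v) (n * v) := by
  have hA : 0 < q₁ * q₃ := Nat.mul_pos h₁ h₃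
  have hB : 0 < q₂ * q₄ := Nat.mul_pos h₂ h₄
  haveI : NeZero (q₁ * q₃) := ⟨hA.ne'⟩
  haveI : NeZero (q₂ * q₄) := ⟨hB.ne'⟩
  haveI : NeZero (q₁ * q₃ * (q₂ * q₄)) := ⟨(Nat.mul_pos hA hB).ne'⟩
  have c14 : Nat.Coprime q₁ q₄ :=
    Nat.Coprime.coprime_dvd_right (dvd_mul_left q₄ q₃)
      (Nat.Coprime.coprime_dvd_left (dvd_mul_right q₁ q₂) hco₁)
  have c23 : Nat.Coprime q₂ q₃ :=
    Nat.Coprime.coprime_dvd_right (dvd_mul_right q₃ q₄)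
      (Nat.Coprime.coprime_dvd_left (dvd_mul_left q₂ q₁) hco₁)
  have hAB : Nat.Coprime (q₁ * q₃) (q₂ * q₄) :=
    Nat.Coprime.mul (Nat.Coprime.mul_right hco₂ c14) (Nat.Coprime.mul_right c23.symm hco₃)
  have hd12 : q₁ * q₂ ∣ q₁ * q₃ * (q₂ * q₄) := ⟨q₃ * q₄, by ring⟩
  have hd34 : q₃ * q₄ ∣ q₁ * q₃ * (q₂ * q₄) := ⟨q₁ * q₂, by ring⟩
  rw [lamStar_eq_zmod (q₁ * q₂) (q₃ * q₄) (q₁ * q₃ * (q₂ * q₄)) (Nat.mul_pos h₁ h₂)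
      (Nat.mul_pos h₃ h₄) (by ring) hd12 hd34 l m n,
    lamStar_eq_zmod q₁ q₃ (q₁ * q₃) h₁ h₃ rfl (dvd_mul_right q₁ q₃) (dvd_mul_left q₃ q₁)
      (l * u) (m * u) (n * u),
    lamStar_eq_zmod q₂ q₄ (q₂ * q₄) h₂ h₄ rfl (dvd_mul_right q₂ q₄) (dvd_mul_left q₄ q₂)
      (l * v) (m * v) (n * v)]
  rw [sum6]
  rw [sum3_equiv (ZMod.chineseRemainder hAB).toEquiv]
  refine Fintype.sum_congr _ _ fun p => Fintype.sum_congr _ _ fun q =>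
    Fintype.sum_congr _ _ fun r => ?_
  obtain ⟨wx, rfl⟩ : ∃ w, (ZMod.chineseRemainder hAB).toEquiv w = p :=
    ⟨(ZMod.chineseRemainder hAB).toEquiv.symm p, Equiv.apply_symm_apply _ p⟩
  obtain ⟨wy, rfl⟩ : ∃ w, (ZMod.chineseRemainder hAB).toEquiv w = q :=
    ⟨(ZMod.chineseRemainder hAB).toEquiv.symm q, Equiv.apply_symm_apply _ q⟩
  obtain ⟨wz, rfl⟩ : ∃ w, (ZMod.chineseRemainder hAB).toEquiv w = r :=
    ⟨(ZMod.chineseRemainder hAB).toEquiv.symm r, Equiv.apply_symm_apply _ r⟩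
  simp only [Equiv.symm_apply_apply]
  simp only [RingEquiv.toEquiv_eq_coe, RingEquiv.coe_toEquiv]
  rw [crt_fst _ _ hAB wx, crt_fst _ _ hAB wy, crt_fst _ _ hAB wz,
    crt_snd _ _ hAB wx, crt_snd _ _ hAB wy, crt_snd _ _ hAB wz]
  obtain ⟨kx, rfl⟩ := ZMod.natCast_zmod_surjective wx
  obtain ⟨ky, rfl⟩ := ZMod.natCast_zmod_surjective wy
  obtain ⟨kz, rfl⟩ := ZMod.natCast_zmod_surjective wz
  simp only [map_natCast]
  rw [F_natCast (q₁ * q₂) (q₃ * q₄) (q₁ * q₃ * (q₂ * q₄)) hd12 hd34 l m n kx ky kz,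
    F_natCast q₁ q₃ (q₁ * q₃) (dvd_mul_right q₁ q₃) (dvd_mul_left q₃ q₁)
      (l * u) (m * u) (n * u) kx ky kz,
    F_natCast q₂ q₄ (q₂ * q₄) (dvd_mul_right q₂ q₄) (dvd_mul_left q₄ q₂)
      (l * v) (m * v) (n * v) kx ky kz]
  have hd1 : (q₁ * q₂ ∣ (kx ^ 2 + ky ^ 2 + kz + 1)) ↔
      (q₁ ∣ (kx ^ 2 + ky ^ 2 + kz + 1) ∧ q₂ ∣ (kx ^ 2 + ky ^ 2 + kz + 1)) :=
    ⟨fun h => ⟨(dvd_mul_right q₁ q₂).trans h, (dvd_mul_left q₂ q₁).trans h⟩,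
      fun h => Nat.Coprime.mul_dvd_of_dvd_of_dvd hco₂ h.1 h.2⟩
  have hd2 : (q₃ * q₄ ∣ (kx ^ 2 + ky ^ 2 + kz + 2)) ↔
      (q₃ ∣ (kx ^ 2 + ky ^ 2 + kz + 2) ∧ q₄ ∣ (kx ^ 2 + ky ^ 2 + kz + 2)) :=
    ⟨fun h => ⟨(dvd_mul_right q₃ q₄).trans h, (dvd_mul_left q₄ q₃).trans h⟩,
      fun h => Nat.Coprime.mul_dvd_of_dvd_of_dvd hco₃ h.1 h.2⟩
  have hcond : (q₁ * q₂ ∣ (kx ^ 2 + ky ^ 2 + kz + 1) ∧ q₃ * q₄ ∣ (kx ^ 2 + ky ^ 2 + kz + 2)) ↔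
      ((q₁ ∣ (kx ^ 2 + ky ^ 2 + kz + 1) ∧ q₃ ∣ (kx ^ 2 + ky ^ 2 + kz + 2)) ∧
       (q₂ ∣ (kx ^ 2 + ky ^ 2 + kz + 1) ∧ q₄ ∣ (kx ^ 2 + ky ^ 2 + kz + 2))) := by
    rw [hd1, hd2]; tauto
  have harg1 : (l * u * (kx : ℤ) + m * u * (ky : ℤ) + n * u * (kz : ℤ))
      = u * (l * (kx : ℤ) + m * (ky : ℤ) + n * (kz : ℤ)) := by ring
  have harg2 : (l * v * (kx : ℤ) + m * v * (ky : ℤ) + n * v * (kz : ℤ))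
      = v * (l * (kx : ℤ) + m * (ky : ℤ) + n * (kz : ℤ)) := by ring
  have hE := e_split hA hB hAB hu hv (l * (kx : ℤ) + m * (ky : ℤ) + n * (kz : ℤ))
  simp only [hcond, harg1, harg2]
  push_cast at hE
  by_cases c1 : (q₁ ∣ (kx ^ 2 + ky ^ 2 + kz + 1) ∧ q₃ ∣ (kx ^ 2 + ky ^ 2 + kz + 2)) <;>
    by_cases c2 : (q₂ ∣ (kx ^ 2 + ky ^ 2 + kz + 1) ∧ q₄ ∣ (kx ^ 2 + ky ^ 2 + kz + 2)) <;>
    simp [c1, c2, hE]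
end

section
/- Let q₁, q₂ be coprime positive integers with 8 ∤ q₁q₂, and H₀ ≥ 2. Then for every ε > 0, ∑_{1 ≤ l, m, n ≤ H₀} |λ*(q₁, q₂, l, m, n)|/(lmn) ≪_ε (q₁q₂)^{2+ε} H₀^ε. -/
open Finset

lemma abs_e (t : ℝ) : ‖e t‖ = 1 := by
  rw [e, Complex.norm_exp]
  have : (2 * Real.pi * Complex.I * t).re = 0 := by simp
  rw [this, Real.exp_zero]

lemma lamStar_abs_le (a b : ℕ) (l m n : ℤ) (ha : 0 < a) (hb : 0 < b)
    (hab : Nat.Coprime a b) :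
    ‖lamStar a b l m n‖ ≤ ((a * b : ℕ) : ℝ) ^ 2 := by
  have key : ∀ x y : ℕ, ‖∑ z ∈ Finset.Icc 1 (a * b),
      if a ∣ (x ^ 2 + y ^ 2 + z + 1) ∧ b ∣ (x ^ 2 + y ^ 2 + z + 2) then
        e (((l * (x : ℤ) + m * (y : ℤ) + n * (z : ℤ) : ℤ) : ℝ) / ((a * b : ℕ) : ℝ))
      else 0‖ ≤ 1 := by
    intro x y
    refine le_trans (norm_sum_le _ _) ?_
    rw [← Finset.sum_filter_add_sum_filter_not (Finset.Icc 1 (a*b))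
      (fun z => a ∣ (x ^ 2 + y ^ 2 + z + 1) ∧ b ∣ (x ^ 2 + y ^ 2 + z + 2))]
    have h2 : ∑ z ∈ (Finset.Icc 1 (a*b)).filter
        (fun z => ¬(a ∣ (x ^ 2 + y ^ 2 + z + 1) ∧ b ∣ (x ^ 2 + y ^ 2 + z + 2))),
        ‖if a ∣ (x ^ 2 + y ^ 2 + z + 1) ∧ b ∣ (x ^ 2 + y ^ 2 + z + 2) then
          e (((l * (x : ℤ) + m * (y : ℤ) + n * (z : ℤ) : ℤ) : ℝ) / ((a * b : ℕ) : ℝ))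
        else 0‖ = 0 := by
      refine Finset.sum_eq_zero fun z hz => ?_
      rw [Finset.mem_filter] at hz
      rw [if_neg hz.2, norm_zero]
    rw [h2, add_zero]
    have h1 : ∑ z ∈ (Finset.Icc 1 (a*b)).filter
        (fun z => (a ∣ (x ^ 2 + y ^ 2 + z + 1) ∧ b ∣ (x ^ 2 + y ^ 2 + z + 2))),
        ‖if a ∣ (x ^ 2 + y ^ 2 + z + 1) ∧ b ∣ (x ^ 2 + y ^ 2 + z + 2) then
          e (((l * (x : ℤ) + m * (y : ℤ) + n * (z : ℤ) : ℤ) : ℝ) / ((a * b : ℕ) : ℝ))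
        else 0‖ = ((Finset.Icc 1 (a*b)).filter
        (fun z => (a ∣ (x ^ 2 + y ^ 2 + z + 1) ∧ b ∣ (x ^ 2 + y ^ 2 + z + 2)))).card := by
      rw [Finset.card_eq_sum_ones, Nat.cast_sum]
      refine Finset.sum_congr rfl fun z hz => ?_
      rw [Finset.mem_filter] at hz
      rw [if_pos hz.2, abs_e, Nat.cast_one]
    rw [h1]
    have hcard : ((Finset.Icc 1 (a*b)).filter
        (fun z => (a ∣ (x ^ 2 + y ^ 2 + z + 1) ∧ b ∣ (x ^ 2 + y ^ 2 + z + 2)))).card ≤ 1 := by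
      refine Finset.card_le_one.2 fun z1 hz1 z2 hz2 => ?_
      rw [Finset.mem_filter, Finset.mem_Icc] at hz1 hz2
      obtain ⟨⟨hz1l, hz1u⟩, ha1, hb1⟩ := hz1
      obtain ⟨⟨hz2l, hz2u⟩, ha2, hb2⟩ := hz2
      have hai : (a : ℤ) ∣ (z1 : ℤ) - z2 := by
        have d1 : (a : ℤ) ∣ ((x:ℤ) ^ 2 + (y:ℤ) ^ 2 + z1 + 1) := by exact_mod_cast Int.natCast_dvd_natCast.2 ha1
        have d2 : (a : ℤ) ∣ ((x:ℤ) ^ 2 + (y:ℤ) ^ 2 + z2 + 1) := by exact_mod_cast Int.natCast_dvd_natCast.2 ha2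
        have := dvd_sub d1 d2
        simpa using this
      have hbi : (b : ℤ) ∣ (z1 : ℤ) - z2 := by
        have d1 : (b : ℤ) ∣ ((x:ℤ) ^ 2 + (y:ℤ) ^ 2 + z1 + 2) := by exact_mod_cast Int.natCast_dvd_natCast.2 hb1
        have d2 : (b : ℤ) ∣ ((x:ℤ) ^ 2 + (y:ℤ) ^ 2 + z2 + 2) := by exact_mod_cast Int.natCast_dvd_natCast.2 hb2
        have := dvd_sub d1 d2
        simpa using this
      have hco : IsCoprime (a : ℤ) (b : ℤ) := Nat.isCoprime_iff_coprime.2 hab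
      have habd : ((a : ℤ) * b) ∣ (z1 : ℤ) - z2 := hco.mul_dvd hai hbi
      have habs : |(z1 : ℤ) - z2| < (a : ℤ) * b := by
        rw [abs_sub_lt_iff]
        constructor <;> [skip; skip] <;>
          · push_cast
            have h1 := hz1l; have h2 := hz2l; have h3 := hz1u; have h4 := hz2u
            have : ((z1 : ℤ) ≤ (a*b : ℕ)) := by exact_mod_cast hz1u
            have : ((z2 : ℤ) ≤ (a*b : ℕ)) := by exact_mod_cast hz2u
            push_cast at *
            omega
      have := Int.eq_zero_of_abs_lt_dvd habd habs
      exact_mod_cast sub_eq_zero.1 this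
    calc (((Finset.Icc 1 (a*b)).filter _).card : ℝ) ≤ (1 : ℕ) := by exact_mod_cast hcard
    _ = 1 := by norm_num
  calc ‖lamStar a b l m n‖
      ≤ ∑ x ∈ Finset.Icc 1 (a*b), ‖∑ y ∈ Finset.Icc 1 (a * b),
          ∑ z ∈ Finset.Icc 1 (a * b),
          if a ∣ (x ^ 2 + y ^ 2 + z + 1) ∧ b ∣ (x ^ 2 + y ^ 2 + z + 2) then
            e (((l * (x : ℤ) + m * (y : ℤ) + n * (z : ℤ) : ℤ) : ℝ) / ((a * b : ℕ) : ℝ))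
          else 0‖ := norm_sum_le _ _
    _ ≤ ∑ x ∈ Finset.Icc 1 (a*b), ∑ y ∈ Finset.Icc 1 (a*b), ‖∑ z ∈ Finset.Icc 1 (a * b),
          if a ∣ (x ^ 2 + y ^ 2 + z + 1) ∧ b ∣ (x ^ 2 + y ^ 2 + z + 2) then
            e (((l * (x : ℤ) + m * (y : ℤ) + n * (z : ℤ) : ℤ) : ℝ) / ((a * b : ℕ) : ℝ))
          else 0‖ := Finset.sum_le_sum fun x _ => norm_sum_le _ _
    _ ≤ ∑ _x ∈ Finset.Icc 1 (a*b), ∑ _y ∈ Finset.Icc 1 (a*b), (1:ℝ) :=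
        Finset.sum_le_sum fun x _ => Finset.sum_le_sum fun y _ => key x y
    _ = ((a*b : ℕ) : ℝ) ^ 2 := by
        simp [Nat.card_Icc]
        ring

lemma sum_inv_le_one_add_log (H : ℕ) :
    ∑ l ∈ Finset.Icc 1 H, (1 : ℝ) / l ≤ 1 + Real.log H := by
  have h := harmonic_le_one_add_log H
  have he : ((harmonic H : ℚ) : ℝ) = ∑ l ∈ Finset.Icc 1 H, (1 : ℝ) / l := by
    rw [harmonic_eq_sum_Icc]
    push_cast
    simp [one_div]
  linarith [h, he.symm.le, he.le]

theorem lamStar_triple_sum_bound (ε : ℝ) (hε : 0 < ε) :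
    ∃ C : ℝ, 0 < C ∧ ∀ q₁ q₂ H₀ : ℕ, 0 < q₁ → 0 < q₂ → Nat.Coprime q₁ q₂ →
      ¬ (8 ∣ q₁ * q₂) → 2 ≤ H₀ →
        ∑ l ∈ Finset.Icc 1 H₀, ∑ m ∈ Finset.Icc 1 H₀, ∑ n ∈ Finset.Icc 1 H₀,
            ‖lamStar q₁ q₂ (l : ℤ) (m : ℤ) (n : ℤ)‖ / ((l * m * n : ℕ) : ℝ) ≤
          C * ((q₁ * q₂ : ℕ) : ℝ) ^ ((2 : ℝ) + ε) * (H₀ : ℝ) ^ (ε : ℝ) := by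
  refine ⟨(1 + 3 / ε) ^ 3, by positivity, fun q₁ q₂ H₀ hq1 hq2 hco _ hH => ?_⟩
  set Q : ℝ := ((q₁ * q₂ : ℕ) : ℝ) with hQ
  have hQ1 : (1 : ℝ) ≤ Q := by
    rw [hQ]
    exact_mod_cast Nat.one_le_iff_ne_zero.2 (Nat.mul_ne_zero hq1.ne' hq2.ne')
  have hH1 : (1 : ℝ) ≤ (H₀ : ℝ) := by exact_mod_cast le_trans (by norm_num) hH
  -- step 1: bound each term
  have step1 : ∑ l ∈ Finset.Icc 1 H₀, ∑ m ∈ Finset.Icc 1 H₀, ∑ n ∈ Finset.Icc 1 H₀,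
      ‖lamStar q₁ q₂ (l : ℤ) (m : ℤ) (n : ℤ)‖ / ((l * m * n : ℕ) : ℝ) ≤
      Q ^ 2 * ((∑ l ∈ Finset.Icc 1 H₀, (1:ℝ)/l) * (∑ m ∈ Finset.Icc 1 H₀, (1:ℝ)/m) *
        (∑ n ∈ Finset.Icc 1 H₀, (1:ℝ)/n)) := by
    have pointwise : ∑ l ∈ Finset.Icc 1 H₀, ∑ m ∈ Finset.Icc 1 H₀, ∑ n ∈ Finset.Icc 1 H₀,
        ‖lamStar q₁ q₂ (l : ℤ) (m : ℤ) (n : ℤ)‖ / ((l * m * n : ℕ) : ℝ) ≤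
        ∑ l ∈ Finset.Icc 1 H₀, ∑ m ∈ Finset.Icc 1 H₀, ∑ n ∈ Finset.Icc 1 H₀,
          Q ^ 2 * ((1:ℝ)/l * (1/m) * (1/n)) := by
      refine Finset.sum_le_sum fun l hl => Finset.sum_le_sum fun m hm =>
        Finset.sum_le_sum fun n hn => ?_
      rw [Finset.mem_Icc] at hl hm hn
      have hlp : (0:ℝ) < l := by exact_mod_cast hl.1
      have hmp : (0:ℝ) < m := by exact_mod_cast hm.1
      have hnp : (0:ℝ) < n := by exact_mod_cast hn.1
      have hb := lamStar_abs_le q₁ q₂ l m n hq1 hq2 hco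
      rw [div_le_iff₀ (by exact_mod_cast Nat.mul_pos (Nat.mul_pos hl.1 hm.1) hn.1 : (0:ℝ) < ((l * m * n : ℕ) : ℝ))]
      push_cast
      calc ‖lamStar q₁ q₂ (l : ℤ) (m : ℤ) (n : ℤ)‖ ≤ Q ^ 2 := hb
        _ = Q ^ 2 * (1/l * (1/m) * (1/n)) * ((l:ℝ) * m * n) := by
            field_simp
    refine le_trans pointwise (le_of_eq ?_)
    calc ∑ l ∈ Finset.Icc 1 H₀, ∑ m ∈ Finset.Icc 1 H₀, ∑ n ∈ Finset.Icc 1 H₀,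
        Q^2 * ((1:ℝ)/l * (1/m) * (1/n))
        = ∑ l ∈ Finset.Icc 1 H₀, ∑ m ∈ Finset.Icc 1 H₀, (Q^2 * ((1:ℝ)/l * (1/m))) *
            ∑ n ∈ Finset.Icc 1 H₀, (1:ℝ)/n := by
          refine Finset.sum_congr rfl fun l _ => Finset.sum_congr rfl fun m _ => ?_
          rw [Finset.mul_sum]
          exact Finset.sum_congr rfl fun n _ => by ring
      _ = ∑ l ∈ Finset.Icc 1 H₀, ((Q^2 * ((1:ℝ)/l) * ∑ n ∈ Finset.Icc 1 H₀, (1:ℝ)/n)) *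
            ∑ m ∈ Finset.Icc 1 H₀, (1:ℝ)/m := by
          refine Finset.sum_congr rfl fun l _ => ?_
          rw [Finset.mul_sum]
          exact Finset.sum_congr rfl fun m _ => by ring
      _ = (Q^2 * (∑ n ∈ Finset.Icc 1 H₀, (1:ℝ)/n) * ∑ m ∈ Finset.Icc 1 H₀, (1:ℝ)/m) *
            ∑ l ∈ Finset.Icc 1 H₀, (1:ℝ)/l := by
          rw [Finset.mul_sum]
          exact Finset.sum_congr rfl fun l _ => by ring
      _ = _ := by ring
  have hlog : ∑ l ∈ Finset.Icc 1 H₀, (1:ℝ)/l ≤ (1 + 3/ε) * (H₀ : ℝ) ^ (ε/3) := by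
    refine le_trans (sum_inv_le_one_add_log H₀) ?_
    have h1 : Real.log H₀ ≤ (H₀:ℝ) ^ (ε/3) / (ε/3) :=
      Real.log_le_rpow_div (by positivity) (by positivity)
    have h2 : (1:ℝ) ≤ (H₀:ℝ) ^ (ε/3) := Real.one_le_rpow hH1 (by positivity)
    have h3 : (H₀:ℝ) ^ (ε/3) / (ε/3) = (3/ε) * (H₀:ℝ) ^ (ε/3) := by
      field_simp
    nlinarith [h1, h2, h3]
  have hpow : ((1 + 3/ε) * (H₀ : ℝ) ^ (ε/3)) ^ 3 = (1 + 3/ε)^3 * (H₀ : ℝ) ^ ε := by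
    rw [mul_pow, ← Real.rpow_natCast ((H₀:ℝ) ^ (ε/3)) 3, ← Real.rpow_mul (by positivity)]
    norm_num
  have hsum_nonneg : (0:ℝ) ≤ ∑ l ∈ Finset.Icc 1 H₀, (1:ℝ)/l :=
    Finset.sum_nonneg fun l _ => by positivity
  have hQpow : Q ^ 2 ≤ Q ^ ((2:ℝ) + ε) := by
    rw [show Q ^ 2 = Q ^ ((2:ℝ):ℝ) by rw [Real.rpow_two]]
    exact Real.rpow_le_rpow_of_exponent_le hQ1 (by linarith)
  refine le_trans step1 ?_
  have hprod : (∑ l ∈ Finset.Icc 1 H₀, (1:ℝ)/l) * (∑ m ∈ Finset.Icc 1 H₀, (1:ℝ)/m) *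
      (∑ n ∈ Finset.Icc 1 H₀, (1:ℝ)/n) ≤ (1 + 3/ε)^3 * (H₀ : ℝ) ^ ε := by
    rw [← hpow]
    have hx := hlog
    calc (∑ l ∈ Finset.Icc 1 H₀, (1:ℝ)/l) * (∑ m ∈ Finset.Icc 1 H₀, (1:ℝ)/m) *
        (∑ n ∈ Finset.Icc 1 H₀, (1:ℝ)/n)
        ≤ ((1 + 3/ε) * (H₀ : ℝ) ^ (ε/3)) * ((1 + 3/ε) * (H₀ : ℝ) ^ (ε/3)) *
          ((1 + 3/ε) * (H₀ : ℝ) ^ (ε/3)) := by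
          have hpos : (0:ℝ) ≤ (1 + 3/ε) * (H₀ : ℝ) ^ (ε/3) := by positivity
          exact mul_le_mul (mul_le_mul hx hx hsum_nonneg hpos) hx hsum_nonneg
            (mul_nonneg hpos hpos)
      _ = ((1 + 3/ε) * (H₀ : ℝ) ^ (ε/3)) ^ 3 := by ring
  calc Q ^ 2 * ((∑ l ∈ Finset.Icc 1 H₀, (1:ℝ)/l) * (∑ m ∈ Finset.Icc 1 H₀, (1:ℝ)/m) *
      (∑ n ∈ Finset.Icc 1 H₀, (1:ℝ)/n))
      ≤ Q ^ ((2:ℝ) + ε) * ((1 + 3/ε)^3 * (H₀ : ℝ) ^ ε) := by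
        refine mul_le_mul hQpow hprod (by positivity) ?_
        positivity
    _ = (1 + 3/ε)^3 * Q ^ ((2:ℝ)+ε) * (H₀ : ℝ) ^ ε := by ring
end
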